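/- Let γ ∈ (0,1], σ > 3 and α ∈ [0,1/2) with σ − α > 3. There exists a constant C > 0, depending only on γ, σ and α, such that for every z ≥ 0, every t ≥ 0 and every k ∈ ℤ³ with k ≠ 0, one has ∑_{ℓ ∈ ℤ³, ℓ ≠ 0, ℓ ≠ k} [exp(z⟨k,kt⟩^γ)·⟨k,kt⟩^σ] / [exp(z⟨ℓ,ℓt⟩^γ)·⟨ℓ,ℓt⟩^σ · exp(z⟨k−ℓ,(k−ℓ)t⟩^γ)·⟨k−ℓ,(k−ℓ)t⟩^σ] · |ℓ|^α·|k−ℓ|^α / |k|^α ≤ C. -/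

import Mathlib

set_option maxHeartbeats 1000000


/-- Euclidean norm of a lattice point `k ∈ ℤ³`, viewed as a vector of `ℝ³`. -/
noncomputable def knorm (k : Fin 3 → ℤ) : ℝ := Real.sqrt (∑ i, ((k i : ℝ)) ^ 2)

/-- Japanese bracket `⟨k, kt⟩ = √(1 + |k|² + |kt|²)`. -/
noncomputable def jb (k : Fin 3 → ℤ) (t : ℝ) : ℝ :=
  Real.sqrt (1 + (∑ i, ((k i : ℝ)) ^ 2) + (∑ i, (t * (k i : ℝ)) ^ 2))

/-- The kernel appearing in the summability claim of the product estimate: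
`A_{k,kt} · A_{ℓ,ℓt}^{-1} · A_{k-ℓ,(k-ℓ)t}^{-1} · |ℓ|^α |k-ℓ|^α / |k|^α`,
with the convention that the excluded indices `ℓ = 0` and `ℓ = k` contribute zero. -/
noncomputable def kernelTerm (γ σ α z t : ℝ) (k ℓ : Fin 3 → ℤ) : ℝ :=
  if ℓ = 0 ∨ ℓ = k then 0
  else
    (Real.exp (z * jb k t ^ γ) * jb k t ^ σ) /
      (Real.exp (z * jb ℓ t ^ γ) * jb ℓ t ^ σ *
        (Real.exp (z * jb (k - ℓ) t ^ γ) * jb (k - ℓ) t ^ σ)) *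
      (knorm ℓ ^ α * knorm (k - ℓ) ^ α / knorm k ^ α)


-- basic facts
lemma jb_eq (k : Fin 3 → ℤ) (t : ℝ) :
    jb k t = Real.sqrt (1 + (1 + t ^ 2) * ∑ i, ((k i : ℝ)) ^ 2) := by
  unfold jb
  congr 1
  rw [show (∑ i, (t * (k i : ℝ)) ^ 2) = t ^ 2 * ∑ i, ((k i : ℝ)) ^ 2 by
    rw [Finset.mul_sum]; exact Finset.sum_congr rfl fun i _ => by ring]
  ring

lemma one_le_jb (k : Fin 3 → ℤ) (t : ℝ) : 1 ≤ jb k t := by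
  rw [jb_eq]
  have h : (1:ℝ) ≤ 1 + (1 + t ^ 2) * ∑ i, ((k i : ℝ)) ^ 2 := by
    have : (0:ℝ) ≤ ∑ i, ((k i : ℝ)) ^ 2 := by positivity
    nlinarith
  calc (1:ℝ) = Real.sqrt 1 := by simp
  _ ≤ _ := Real.sqrt_le_sqrt h

lemma jb_pos (k : Fin 3 → ℤ) (t : ℝ) : 0 < jb k t := lt_of_lt_of_le one_pos (one_le_jb k t)

lemma jb_zero_le (k : Fin 3 → ℤ) (t : ℝ) : jb k 0 ≤ jb k t := by
  rw [jb_eq, jb_eq]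
  apply Real.sqrt_le_sqrt
  have : (0:ℝ) ≤ ∑ i, ((k i : ℝ)) ^ 2 := by positivity
  nlinarith [sq_nonneg t]

lemma knorm_nonneg (k : Fin 3 → ℤ) : 0 ≤ knorm k := Real.sqrt_nonneg _

lemma one_le_sum_sq {k : Fin 3 → ℤ} (hk : k ≠ 0) : (1:ℝ) ≤ ∑ i, ((k i : ℝ)) ^ 2 := by
  obtain ⟨i, hi⟩ := Function.ne_iff.mp hk
  have h1 : (1:ℝ) ≤ ((k i : ℝ)) ^ 2 := by
    have hi' : k i ≠ 0 := by simpa using hi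
    have h2 : (1:ℤ) ≤ (k i) ^ 2 := by
      have := Int.one_le_abs hi'
      nlinarith [sq_abs (k i)]
    exact_mod_cast h2
  calc (1:ℝ) ≤ ((k i : ℝ)) ^ 2 := h1
  _ ≤ ∑ j, ((k j : ℝ)) ^ 2 :=
      Finset.single_le_sum (f := fun j => ((k j : ℝ)) ^ 2) (fun j _ => by positivity)
        (Finset.mem_univ i)

lemma one_le_knorm {k : Fin 3 → ℤ} (hk : k ≠ 0) : 1 ≤ knorm k := by
  unfold knorm
  calc (1:ℝ) = Real.sqrt 1 := by simp
  _ ≤ _ := Real.sqrt_le_sqrt (one_le_sum_sq hk)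

lemma knorm_add_le (a b : Fin 3 → ℤ) : knorm (a + b) ≤ knorm a + knorm b := by
  unfold knorm
  have hP : (0:ℝ) ≤ ∑ i, ((a i : ℝ)) ^ 2 := by positivity
  have hQ : (0:ℝ) ≤ ∑ i, ((b i : ℝ)) ^ 2 := by positivity
  set p := Real.sqrt (∑ i, ((a i : ℝ)) ^ 2) with hp
  set q := Real.sqrt (∑ i, ((b i : ℝ)) ^ 2) with hq
  have hp2 : p ^ 2 = ∑ i, ((a i : ℝ)) ^ 2 := Real.sq_sqrt hP
  have hq2 : q ^ 2 = ∑ i, ((b i : ℝ)) ^ 2 := Real.sq_sqrt hQ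
  have hcs : ∑ i, (a i : ℝ) * (b i : ℝ) ≤ p * q := by
    simpa [hp, hq] using Real.sum_mul_le_sqrt_mul_sqrt Finset.univ
      (fun i => ((a i : ℝ))) (fun i => ((b i : ℝ)))
  have hsum : ∑ i, (((a + b) i : ℝ)) ^ 2 ≤ (p + q) ^ 2 := by
    have : ∑ i, (((a + b) i : ℝ)) ^ 2
        = (∑ i, ((a i : ℝ)) ^ 2) + (∑ i, ((b i : ℝ)) ^ 2)
          + 2 * ∑ i, (a i : ℝ) * (b i : ℝ) := by
      rw [← Finset.sum_add_distrib, Finset.mul_sum, ← Finset.sum_add_distrib]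
      refine Finset.sum_congr rfl fun i _ => ?_
      simp only [Pi.add_apply, Int.cast_add]
      ring
    rw [this]
    nlinarith [Real.sqrt_nonneg (∑ i, ((a i : ℝ)) ^ 2), Real.sqrt_nonneg (∑ i, ((b i : ℝ)) ^ 2)]
  calc Real.sqrt (∑ i, (((a + b) i : ℝ)) ^ 2) ≤ Real.sqrt ((p + q) ^ 2) :=
        Real.sqrt_le_sqrt hsum
  _ = p + q := Real.sqrt_sq (by positivity)


lemma sqrt_s_mul_knorm_le (ℓ : Fin 3 → ℤ) (t : ℝ) :
    Real.sqrt (1 + t ^ 2) * knorm ℓ ≤ jb ℓ t := by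
  rw [jb_eq]
  unfold knorm
  rw [← Real.sqrt_mul (by positivity)]
  apply Real.sqrt_le_sqrt
  nlinarith [Finset.sum_nonneg (fun i (_ : i ∈ Finset.univ) => sq_nonneg ((ℓ i : ℝ)))]

lemma jb_le_sqrt2_s_knorm {k : Fin 3 → ℤ} (hk : k ≠ 0) (t : ℝ) :
    jb k t ≤ Real.sqrt 2 * (Real.sqrt (1 + t ^ 2) * knorm k) := by
  rw [jb_eq]
  unfold knorm
  rw [← Real.sqrt_mul (by positivity), ← Real.sqrt_mul (by norm_num)]
  apply Real.sqrt_le_sqrt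
  have h1 : (1:ℝ) ≤ ∑ i, ((k i : ℝ)) ^ 2 := one_le_sum_sq hk
  nlinarith [sq_nonneg t]

set_option maxHeartbeats 1000000 in
lemma jb_triangle (k ℓ : Fin 3 → ℤ) (t : ℝ) : jb k t ≤ jb ℓ t + jb (k - ℓ) t := by
  rw [jb_eq, jb_eq, jb_eq]
  set s : ℝ := 1 + t ^ 2 with hs
  have hs1 : (1:ℝ) ≤ s := by nlinarith [sq_nonneg t]
  set P := ∑ i, ((ℓ i : ℝ)) ^ 2 with hP
  set Q := ∑ i, (((k - ℓ) i : ℝ)) ^ 2 with hQ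
  set R := ∑ i, ((k i : ℝ)) ^ 2 with hR
  have hPn : (0:ℝ) ≤ P := by positivity
  have hQn : (0:ℝ) ≤ Q := by positivity
  have hRn : (0:ℝ) ≤ R := by positivity
  set p := Real.sqrt P with hpdef
  set q := Real.sqrt Q with hqdef
  set r := Real.sqrt R with hrdef
  have hptri : r ≤ p + q := by
    have h := knorm_add_le ℓ (k - ℓ)
    rw [add_sub_cancel] at h
    exact h
  have hp0 : 0 ≤ p := Real.sqrt_nonneg _
  have hq0 : 0 ≤ q := Real.sqrt_nonneg _
  have hr0 : 0 ≤ r := Real.sqrt_nonneg _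
  have hp2 : p ^ 2 = P := Real.sq_sqrt hPn
  have hq2 : q ^ 2 = Q := Real.sq_sqrt hQn
  have hr2 : r ^ 2 = R := Real.sq_sqrt hRn
  set u := Real.sqrt (1 + s * P) with hudef
  set v := Real.sqrt (1 + s * Q) with hvdef
  have hu0 : 0 ≤ u := Real.sqrt_nonneg _
  have hv0 : 0 ≤ v := Real.sqrt_nonneg _
  have hu2 : u ^ 2 = 1 + s * P := Real.sq_sqrt (by nlinarith)
  have hv2 : v ^ 2 = 1 + s * Q := Real.sq_sqrt (by nlinarith)
  have hmono : Real.sqrt (1 + s * R) ≤ Real.sqrt ((u + v) ^ 2) := by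
    apply Real.sqrt_le_sqrt
    clear_value s P Q R p q r u v
    subst hp2 hq2 hr2
    have huv : 1 + s * (p * q) ≤ u * v := by
      have h1 : (1 + s * (p * q)) ^ 2 ≤ (u * v) ^ 2 := by
        have h2 : (u * v) ^ 2 = (1 + s * p ^ 2) * (1 + s * q ^ 2) := by rw [mul_pow, hu2, hv2]
        rw [h2]
        nlinarith [mul_nonneg (by linarith : (0:ℝ) ≤ s) (sq_nonneg (p - q))]
      nlinarith [mul_nonneg hu0 hv0, mul_nonneg (mul_nonneg (by linarith : (0:ℝ) ≤ s) hp0) hq0]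
    nlinarith [huv, hu2, hv2, mul_le_mul_of_nonneg_left
      (by nlinarith [hptri] : r ^ 2 ≤ (p + q) ^ 2) (by linarith : (0:ℝ) ≤ s)]
  calc Real.sqrt (1 + s * R) ≤ Real.sqrt ((u + v) ^ 2) := hmono
  _ = u + v := Real.sqrt_sq (by positivity)

lemma rpow_subadd {γ : ℝ} (hγ0 : 0 ≤ γ) (hγ1 : γ ≤ 1) {x y : ℝ} (hx : 0 ≤ x) (hy : 0 ≤ y) :
    (x + y) ^ γ ≤ x ^ γ + y ^ γ := by
  have h := NNReal.rpow_add_le_add_rpow (x.toNNReal) (y.toNNReal) hγ0 hγ1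
  rw [← NNReal.coe_le_coe] at h
  push_cast at h
  simpa [Real.coe_toNNReal _ hx, Real.coe_toNNReal _ hy] using h


lemma kernelTerm_nonneg (γ σ α z t : ℝ) (k ℓ : Fin 3 → ℤ) :
    0 ≤ kernelTerm γ σ α z t k ℓ := by
  unfold kernelTerm
  split
  · exact le_refl 0
  · exact mul_nonneg
      (div_nonneg (mul_nonneg (Real.exp_pos _).le (Real.rpow_nonneg (jb_pos k t).le _))
        (mul_nonneg (mul_nonneg (Real.exp_pos _).le (Real.rpow_nonneg (jb_pos ℓ t).le _))
          (mul_nonneg (Real.exp_pos _).le (Real.rpow_nonneg (jb_pos (k - ℓ) t).le _))))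
      (div_nonneg (mul_nonneg (Real.rpow_nonneg (knorm_nonneg ℓ) _)
        (Real.rpow_nonneg (knorm_nonneg (k - ℓ)) _)) (Real.rpow_nonneg (knorm_nonneg k) _))

set_option maxHeartbeats 1000000 in
lemma kernelTerm_le {γ σ α : ℝ} (hγ0 : 0 < γ) (hγ1 : γ ≤ 1) (hα0 : 0 ≤ α)
    (hασ : α ≤ σ) {z t : ℝ} (hz : 0 ≤ z) {k : Fin 3 → ℤ} (hk : k ≠ 0) (ℓ : Fin 3 → ℤ) :
    kernelTerm γ σ α z t k ℓ ≤
      Real.sqrt 2 ^ α * 2 ^ (σ - α) * (jb ℓ 0 ^ (-(σ - α)) + jb (k - ℓ) 0 ^ (-(σ - α))) := by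
  have hg1 : (0:ℝ) ≤ jb ℓ 0 ^ (-(σ - α)) := Real.rpow_nonneg (jb_pos ℓ 0).le _
  have hg2 : (0:ℝ) ≤ jb (k - ℓ) 0 ^ (-(σ - α)) := Real.rpow_nonneg (jb_pos _ 0).le _
  have hc1 : (0:ℝ) ≤ Real.sqrt 2 ^ α := Real.rpow_nonneg (Real.sqrt_nonneg 2) _
  have hc2 : (0:ℝ) < (2:ℝ) ^ (σ - α) := Real.rpow_pos_of_pos (by norm_num) _
  by_cases hcase : ℓ = 0 ∨ ℓ = k
  · rw [kernelTerm, if_pos hcase]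
    exact mul_nonneg (mul_nonneg hc1 hc2.le) (by linarith)
  rw [kernelTerm, if_neg hcase]
  push_neg at hcase
  obtain ⟨hl0, hlk⟩ := hcase
  have hkl0 : k - ℓ ≠ 0 := sub_ne_zero.mpr (Ne.symm hlk)
  have hA : 0 < jb k t := jb_pos k t
  have hB : 0 < jb ℓ t := jb_pos ℓ t
  have hD : 0 < jb (k - ℓ) t := jb_pos (k - ℓ) t
  have ha1 : 1 ≤ knorm k := one_le_knorm hk
  have hb0 : 0 ≤ knorm ℓ := knorm_nonneg ℓ
  have hd0 : 0 ≤ knorm (k - ℓ) := knorm_nonneg (k - ℓ)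
  have ha0 : (0:ℝ) < knorm k := by linarith
  -- exponential factor bound
  have hexp : Real.exp (z * jb k t ^ γ) ≤
      Real.exp (z * jb ℓ t ^ γ) * Real.exp (z * jb (k - ℓ) t ^ γ) := by
    rw [← Real.exp_add]
    apply Real.exp_le_exp.mpr
    have h1 : jb k t ^ γ ≤ jb ℓ t ^ γ + jb (k - ℓ) t ^ γ :=
      le_trans (Real.rpow_le_rpow hA.le (jb_triangle k ℓ t) hγ0.le)
        (rpow_subadd hγ0.le hγ1 hB.le hD.le)
    nlinarith [mul_le_mul_of_nonneg_left h1 hz]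
  -- norm factor bound
  have hss0 : (0:ℝ) ≤ Real.sqrt (1 + t ^ 2) := Real.sqrt_nonneg _
  have hs1 : (1:ℝ) ≤ Real.sqrt (1 + t ^ 2) := by
    have := Real.sqrt_le_sqrt (show (1:ℝ) ≤ 1 + t ^ 2 by nlinarith [sq_nonneg t])
    simpa using this
  have hsqrt2 : (0:ℝ) ≤ Real.sqrt 2 := Real.sqrt_nonneg 2
  have hbase : knorm ℓ * knorm (k - ℓ) / knorm k ≤
      Real.sqrt 2 * (jb ℓ t * jb (k - ℓ) t) / jb k t := by
    rw [div_le_div_iff₀ ha0 hA]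
    have k1 : Real.sqrt (1 + t ^ 2) * knorm ℓ ≤ jb ℓ t := sqrt_s_mul_knorm_le ℓ t
    have k2 : Real.sqrt (1 + t ^ 2) * knorm (k - ℓ) ≤ jb (k - ℓ) t := sqrt_s_mul_knorm_le (k - ℓ) t
    have k3 : jb k t ≤ Real.sqrt 2 * (Real.sqrt (1 + t ^ 2) * knorm k) := jb_le_sqrt2_s_knorm hk t
    have hbd : Real.sqrt (1 + t ^ 2) * knorm ℓ * (Real.sqrt (1 + t ^ 2) * knorm (k - ℓ)) ≤
        jb ℓ t * jb (k - ℓ) t :=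
      mul_le_mul k1 k2 (mul_nonneg hss0 hd0) hB.le
    have hsq : Real.sqrt (1 + t ^ 2) * Real.sqrt (1 + t ^ 2) = 1 + t ^ 2 :=
      Real.mul_self_sqrt (by positivity)
    have hsle : Real.sqrt (1 + t ^ 2) ≤ 1 + t ^ 2 := by nlinarith
    have e1 : knorm ℓ * knorm (k - ℓ) * jb k t ≤
        knorm ℓ * knorm (k - ℓ) * (Real.sqrt 2 * (Real.sqrt (1 + t ^ 2) * knorm k)) :=
      mul_le_mul_of_nonneg_left k3 (mul_nonneg hb0 hd0)
    have e4 : (1 + t ^ 2) * (knorm ℓ * knorm (k - ℓ)) ≤ jb ℓ t * jb (k - ℓ) t := by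
      have heq : (1 + t ^ 2) * (knorm ℓ * knorm (k - ℓ))
          = Real.sqrt (1 + t ^ 2) * knorm ℓ * (Real.sqrt (1 + t ^ 2) * knorm (k - ℓ)) := by
        linear_combination (knorm ℓ * knorm (k - ℓ)) * hsq.symm
      rw [heq]; exact hbd
    have e3 : Real.sqrt (1 + t ^ 2) * (knorm ℓ * knorm (k - ℓ)) ≤
        (1 + t ^ 2) * (knorm ℓ * knorm (k - ℓ)) :=
      mul_le_mul_of_nonneg_right hsle (mul_nonneg hb0 hd0)
    have e5 : Real.sqrt 2 * knorm k * (Real.sqrt (1 + t ^ 2) * (knorm ℓ * knorm (k - ℓ))) ≤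
        Real.sqrt 2 * knorm k * (jb ℓ t * jb (k - ℓ) t) :=
      mul_le_mul_of_nonneg_left (e3.trans e4) (mul_nonneg hsqrt2 ha0.le)
    nlinarith [e1, e5]
  -- norm factor in power form
  have hN : knorm ℓ ^ α * knorm (k - ℓ) ^ α / knorm k ^ α ≤
      Real.sqrt 2 ^ α * (jb ℓ t ^ α * jb (k - ℓ) t ^ α / jb k t ^ α) := by
    have h1 : knorm ℓ ^ α * knorm (k - ℓ) ^ α / knorm k ^ α
        = (knorm ℓ * knorm (k - ℓ) / knorm k) ^ α := by
      rw [Real.div_rpow (mul_nonneg hb0 hd0) ha0.le, Real.mul_rpow hb0 hd0]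
    have h2 : Real.sqrt 2 ^ α * (jb ℓ t ^ α * jb (k - ℓ) t ^ α / jb k t ^ α)
        = (Real.sqrt 2 * (jb ℓ t * jb (k - ℓ) t) / jb k t) ^ α := by
      rw [Real.div_rpow (mul_nonneg hsqrt2 (mul_nonneg hB.le hD.le)) hA.le,
        Real.mul_rpow hsqrt2 (mul_nonneg hB.le hD.le), Real.mul_rpow hB.le hD.le]
      ring
    rw [h1, h2]
    exact Real.rpow_le_rpow (by positivity) hbase hα0
  -- positivity of rpow terms
  have hAσ : 0 < jb k t ^ σ := Real.rpow_pos_of_pos hA σ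
  have hBσ : 0 < jb ℓ t ^ σ := Real.rpow_pos_of_pos hB σ
  have hDσ : 0 < jb (k - ℓ) t ^ σ := Real.rpow_pos_of_pos hD σ
  have hAα : 0 < jb k t ^ α := Real.rpow_pos_of_pos hA α
  have hBα : 0 < jb ℓ t ^ α := Real.rpow_pos_of_pos hB α
  have hDα : 0 < jb (k - ℓ) t ^ α := Real.rpow_pos_of_pos hD α
  have hEk : 0 < Real.exp (z * jb k t ^ γ) := Real.exp_pos _
  have hEl : 0 < Real.exp (z * jb ℓ t ^ γ) := Real.exp_pos _
  have hEd : 0 < Real.exp (z * jb (k - ℓ) t ^ γ) := Real.exp_pos _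
  -- step 1 : drop the exponential factors
  have T1 : Real.exp (z * jb k t ^ γ) * jb k t ^ σ /
        (Real.exp (z * jb ℓ t ^ γ) * jb ℓ t ^ σ *
          (Real.exp (z * jb (k - ℓ) t ^ γ) * jb (k - ℓ) t ^ σ)) ≤
      jb k t ^ σ / (jb ℓ t ^ σ * jb (k - ℓ) t ^ σ) := by
    rw [div_le_div_iff₀ (by positivity) (by positivity)]
    have h := mul_le_mul_of_nonneg_right hexp
      (le_of_lt (mul_pos hAσ (mul_pos hBσ hDσ)))
    nlinarith [h]
  set τ := σ - α with hτdef
  have hτ0 : 0 ≤ τ := sub_nonneg.mpr hασ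
  -- step 3 : convolution bound
  have T3 : jb k t ^ τ / (jb ℓ t ^ τ * jb (k - ℓ) t ^ τ) ≤
      2 ^ τ * (jb ℓ 0 ^ (-τ) + jb (k - ℓ) 0 ^ (-τ)) := by
    have h2τ : (0:ℝ) < (2:ℝ) ^ τ := Real.rpow_pos_of_pos (by norm_num) _
    have hBτ : 0 < jb ℓ t ^ τ := Real.rpow_pos_of_pos hB τ
    have hDτ : 0 < jb (k - ℓ) t ^ τ := Real.rpow_pos_of_pos hD τ
    rcases le_total (jb ℓ t) (jb (k - ℓ) t) with hBD | hBD
    · have hA2 : jb k t ≤ 2 * jb (k - ℓ) t := le_trans (jb_triangle k ℓ t) (by linarith)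
      have h1 : jb k t ^ τ ≤ 2 ^ τ * jb (k - ℓ) t ^ τ := by
        calc jb k t ^ τ ≤ (2 * jb (k - ℓ) t) ^ τ := Real.rpow_le_rpow hA.le hA2 hτ0
        _ = 2 ^ τ * jb (k - ℓ) t ^ τ := Real.mul_rpow (by norm_num) hD.le
      have h6 : jb ℓ t ^ (-τ) ≤ jb ℓ 0 ^ (-τ) :=
        Real.rpow_le_rpow_of_nonpos (jb_pos ℓ 0) (jb_zero_le ℓ t) (neg_nonpos.mpr hτ0)
      have h7 : (0:ℝ) ≤ jb (k - ℓ) 0 ^ (-τ) := Real.rpow_nonneg (jb_pos _ 0).le _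
      calc jb k t ^ τ / (jb ℓ t ^ τ * jb (k - ℓ) t ^ τ)
          ≤ 2 ^ τ * jb (k - ℓ) t ^ τ / (jb ℓ t ^ τ * jb (k - ℓ) t ^ τ) := by
            exact div_le_div_of_nonneg_right h1 (mul_pos hBτ hDτ).le
      _ = 2 ^ τ * jb ℓ t ^ (-τ) := by
            rw [Real.rpow_neg hB.le]
            field_simp
      _ ≤ 2 ^ τ * (jb ℓ 0 ^ (-τ) + jb (k - ℓ) 0 ^ (-τ)) := by
            nlinarith [mul_le_mul_of_nonneg_left h6 h2τ.le, mul_nonneg h2τ.le h7]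
    · have hA2 : jb k t ≤ 2 * jb ℓ t := le_trans (jb_triangle k ℓ t) (by linarith)
      have h1 : jb k t ^ τ ≤ 2 ^ τ * jb ℓ t ^ τ := by
        calc jb k t ^ τ ≤ (2 * jb ℓ t) ^ τ := Real.rpow_le_rpow hA.le hA2 hτ0
        _ = 2 ^ τ * jb ℓ t ^ τ := Real.mul_rpow (by norm_num) hB.le
      have h6 : jb (k - ℓ) t ^ (-τ) ≤ jb (k - ℓ) 0 ^ (-τ) :=
        Real.rpow_le_rpow_of_nonpos (jb_pos (k - ℓ) 0) (jb_zero_le (k - ℓ) t) (neg_nonpos.mpr hτ0)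
      have h7 : (0:ℝ) ≤ jb ℓ 0 ^ (-τ) := Real.rpow_nonneg (jb_pos _ 0).le _
      calc jb k t ^ τ / (jb ℓ t ^ τ * jb (k - ℓ) t ^ τ)
          ≤ 2 ^ τ * jb ℓ t ^ τ / (jb ℓ t ^ τ * jb (k - ℓ) t ^ τ) := by
            exact div_le_div_of_nonneg_right h1 (mul_pos hBτ hDτ).le
      _ = 2 ^ τ * jb (k - ℓ) t ^ (-τ) := by
            rw [Real.rpow_neg hD.le]
            field_simp
      _ ≤ 2 ^ τ * (jb ℓ 0 ^ (-τ) + jb (k - ℓ) 0 ^ (-τ)) := by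
            nlinarith [mul_le_mul_of_nonneg_left h6 h2τ.le, mul_nonneg h2τ.le h7]
  -- combine everything
  have hNnn : 0 ≤ knorm ℓ ^ α * knorm (k - ℓ) ^ α / knorm k ^ α :=
    div_nonneg (mul_nonneg (Real.rpow_nonneg hb0 _) (Real.rpow_nonneg hd0 _))
      (Real.rpow_nonneg ha0.le _)
  have step1 : Real.exp (z * jb k t ^ γ) * jb k t ^ σ /
        (Real.exp (z * jb ℓ t ^ γ) * jb ℓ t ^ σ *
          (Real.exp (z * jb (k - ℓ) t ^ γ) * jb (k - ℓ) t ^ σ)) *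
        (knorm ℓ ^ α * knorm (k - ℓ) ^ α / knorm k ^ α) ≤
      jb k t ^ σ / (jb ℓ t ^ σ * jb (k - ℓ) t ^ σ) *
        (Real.sqrt 2 ^ α * (jb ℓ t ^ α * jb (k - ℓ) t ^ α / jb k t ^ α)) :=
    mul_le_mul T1 hN hNnn (le_of_lt (div_pos hAσ (mul_pos hBσ hDσ)))
  have step2 : jb k t ^ σ / (jb ℓ t ^ σ * jb (k - ℓ) t ^ σ) *
        (Real.sqrt 2 ^ α * (jb ℓ t ^ α * jb (k - ℓ) t ^ α / jb k t ^ α)) =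
      Real.sqrt 2 ^ α * (jb k t ^ τ / (jb ℓ t ^ τ * jb (k - ℓ) t ^ τ)) := by
    rw [hτdef, Real.rpow_sub hA, Real.rpow_sub hB, Real.rpow_sub hD]
    field_simp
  calc Real.exp (z * jb k t ^ γ) * jb k t ^ σ /
        (Real.exp (z * jb ℓ t ^ γ) * jb ℓ t ^ σ *
          (Real.exp (z * jb (k - ℓ) t ^ γ) * jb (k - ℓ) t ^ σ)) *
        (knorm ℓ ^ α * knorm (k - ℓ) ^ α / knorm k ^ α)
      ≤ Real.sqrt 2 ^ α * (jb k t ^ τ / (jb ℓ t ^ τ * jb (k - ℓ) t ^ τ)) := by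
        rw [← step2]; exact step1
  _ ≤ Real.sqrt 2 ^ α * (2 ^ τ * (jb ℓ 0 ^ (-τ) + jb (k - ℓ) 0 ^ (-τ))) :=
        mul_le_mul_of_nonneg_left T3 hc1
  _ = Real.sqrt 2 ^ α * 2 ^ τ * (jb ℓ 0 ^ (-τ) + jb (k - ℓ) 0 ^ (-τ)) := by ring

lemma summable_oneD {q : ℝ} (hq : 1 / 2 < q) :
    Summable (fun n : ℤ => ((1:ℝ) + (n:ℝ) ^ 2) ^ (-q)) := by
  have hq0 : 0 < q := by linarith
  have hnat : Summable (fun n : ℕ => ((1:ℝ) + (n:ℝ) ^ 2) ^ (-q)) := by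
    have base : Summable (fun n : ℕ => ((n:ℝ) + 1) ^ (-(2 * q))) := by
      have b0 : Summable (fun n : ℕ => ((n:ℝ)) ^ (-(2 * q))) :=
        Real.summable_nat_rpow.mpr (by linarith)
      have := (summable_nat_add_iff 1).mpr b0
      refine this.congr fun n => ?_
      push_cast
      ring_nf
    have hle : ∀ n : ℕ, ((1:ℝ) + (n:ℝ) ^ 2) ^ (-q) ≤ (2:ℝ) ^ q * ((n:ℝ) + 1) ^ (-(2 * q)) := by
      intro n
      have hn0 : (0:ℝ) ≤ (n:ℝ) := Nat.cast_nonneg n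
      have h1 : ((n:ℝ) + 1) ^ (-(2 * q)) = (((n:ℝ) + 1) ^ (2:ℝ)) ^ (-q) := by
        rw [← Real.rpow_mul (by linarith)]
        ring_nf
      have h2 : (((n:ℝ) + 1) ^ (2:ℝ)) = ((n:ℝ) + 1) ^ (2:ℕ) := Real.rpow_natCast _ 2
      have h3 : ((1:ℝ) + (n:ℝ) ^ 2) ^ (-q) ≤ ((((n:ℝ) + 1) ^ (2:ℕ) : ℝ) / 2) ^ (-q) := by
        apply Real.rpow_le_rpow_of_nonpos (by positivity) (by nlinarith [sq_nonneg ((n:ℝ) - 1)]) (by linarith)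
      have h4 : ((((n:ℝ) + 1) ^ (2:ℕ) : ℝ) / 2) ^ (-q)
          = (2:ℝ) ^ q * (((n:ℝ) + 1) ^ (2:ℕ) : ℝ) ^ (-q) := by
        rw [Real.div_rpow (by positivity) (by norm_num)]
        rw [Real.rpow_neg (by norm_num : (0:ℝ) ≤ 2)]
        field_simp
      calc ((1:ℝ) + (n:ℝ) ^ 2) ^ (-q) ≤ ((((n:ℝ) + 1) ^ (2:ℕ) : ℝ) / 2) ^ (-q) := h3
      _ = (2:ℝ) ^ q * (((n:ℝ) + 1) ^ (2:ℕ) : ℝ) ^ (-q) := h4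
      _ = (2:ℝ) ^ q * ((n:ℝ) + 1) ^ (-(2 * q)) := by rw [h1, h2]
    exact Summable.of_nonneg_of_le (fun n => Real.rpow_nonneg (by positivity) _) hle
      (base.mul_left _)
  apply Summable.of_nat_of_neg
  · exact hnat
  · refine hnat.congr fun n => ?_
    push_cast
    ring_nf

def equivZ3 : (Fin 3 → ℤ) ≃ ℤ × ℤ × ℤ where
  toFun m := (m 0, m 1, m 2)
  invFun p := ![p.1, p.2.1, p.2.2]
  left_inv m := by
    funext i
    fin_cases i <;> simp
  right_inv p := by simp

lemma summable_prod3 {q : ℝ} (hq : 1 / 2 < q) :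
    Summable (fun m : Fin 3 → ℤ => ∏ i, ((1:ℝ) + ((m i : ℝ)) ^ 2) ^ (-q)) := by
  have h1 := summable_oneD hq
  have hnn : ∀ n : ℤ, 0 ≤ ((1:ℝ) + (n:ℝ) ^ 2) ^ (-q) := fun n => Real.rpow_nonneg (by positivity) _
  have h23 : Summable (fun p : ℤ × ℤ =>
      ((1:ℝ) + (p.1:ℝ) ^ 2) ^ (-q) * ((1:ℝ) + (p.2:ℝ) ^ 2) ^ (-q)) :=
    h1.mul_of_nonneg h1 hnn hnn
  have h123 : Summable (fun p : ℤ × ℤ × ℤ =>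
      ((1:ℝ) + (p.1:ℝ) ^ 2) ^ (-q) *
        (((1:ℝ) + (p.2.1:ℝ) ^ 2) ^ (-q) * ((1:ℝ) + (p.2.2:ℝ) ^ 2) ^ (-q))) :=
    h1.mul_of_nonneg h23 hnn (fun p => mul_nonneg (hnn _) (hnn _))
  have := (equivZ3.summable_iff (f := fun p : ℤ × ℤ × ℤ =>
      ((1:ℝ) + (p.1:ℝ) ^ 2) ^ (-q) *
        (((1:ℝ) + (p.2.1:ℝ) ^ 2) ^ (-q) * ((1:ℝ) + (p.2.2:ℝ) ^ 2) ^ (-q)))).mpr h123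
  refine this.congr fun m => ?_
  rw [Fin.prod_univ_three]
  simp [equivZ3, Function.comp]
  ring

lemma jb_zero_sq (m : Fin 3 → ℤ) :
    jb m 0 = Real.sqrt (1 + ∑ i, ((m i : ℝ)) ^ 2) := by
  rw [jb_eq]
  norm_num

lemma summable_jb_rpow {τ : ℝ} (hτ : 3 < τ) : Summable (fun m : Fin 3 → ℤ => jb m 0 ^ (-τ)) := by
  have hq : 1 / 2 < τ / 6 := by linarith
  refine Summable.of_nonneg_of_le (fun m => Real.rpow_nonneg (jb_pos m 0).le _)
    (fun m => ?_) (summable_prod3 hq)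
  set S := ∑ i, ((m i : ℝ)) ^ 2 with hS
  have hS0 : (0:ℝ) ≤ S := by positivity
  have h1 : jb m 0 ^ (-τ) = (1 + S) ^ (-(τ / 2)) := by
    rw [jb_zero_sq, Real.sqrt_eq_rpow, ← Real.rpow_mul (by linarith)]
    ring_nf
    rfl
  have h2 : ∏ i, ((1:ℝ) + ((m i : ℝ)) ^ 2) ^ (-(τ / 6))
      = (∏ i, ((1:ℝ) + ((m i : ℝ)) ^ 2)) ^ (-(τ / 6)) := by
    rw [← Real.finset_prod_rpow _ _ (fun i _ => by positivity)]
  have h3 : (∏ i, ((1:ℝ) + ((m i : ℝ)) ^ 2)) ≤ (1 + S) ^ (3:ℕ) := by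
    have hle : ∀ i : Fin 3, ((1:ℝ) + ((m i : ℝ)) ^ 2) ≤ 1 + S := by
      intro i
      have : ((m i : ℝ)) ^ 2 ≤ S :=
        Finset.single_le_sum (f := fun j => ((m j : ℝ)) ^ 2) (fun j _ => by positivity)
          (Finset.mem_univ i)
      linarith
    calc (∏ i, ((1:ℝ) + ((m i : ℝ)) ^ 2)) ≤ ∏ _i : Fin 3, (1 + S) :=
          Finset.prod_le_prod (fun i _ => by positivity) (fun i _ => hle i)
    _ = (1 + S) ^ (3:ℕ) := by norm_num
  have h4 : (1 + S) ^ (-(τ / 2)) = ((1 + S) ^ (3:ℕ)) ^ (-(τ / 6)) := by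
    rw [← Real.rpow_natCast (1 + S) 3, ← Real.rpow_mul (by linarith)]
    norm_num
    ring_nf
  rw [h1, h2, h4]
  exact Real.rpow_le_rpow_of_nonpos (by positivity) h3 (by linarith)


/-- Key kernel-summability claim in the proof of the product estimate for `F`. -/
theorem kernel_summability {γ σ α : ℝ} (hγ0 : 0 < γ) (hγ1 : γ ≤ 1)
    (hσ : 3 < σ) (hα0 : 0 ≤ α) (hα : α < 1 / 2) (hσα : 3 < σ - α) :
    ∃ C : ℝ, 0 < C ∧ ∀ z t : ℝ, 0 ≤ z → 0 ≤ t → ∀ k : Fin 3 → ℤ, k ≠ 0 →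
      Summable (fun ℓ : Fin 3 → ℤ => kernelTerm γ σ α z t k ℓ) ∧
      (∑' ℓ : Fin 3 → ℤ, kernelTerm γ σ α z t k ℓ) ≤ C := by
  have hτ3 : 3 < σ - α := hσα
  have hασ : α ≤ σ := by linarith
  have hS : Summable (fun m : Fin 3 → ℤ => jb m 0 ^ (-(σ - α))) := summable_jb_rpow hτ3
  set M : ℝ := Real.sqrt 2 ^ α * 2 ^ (σ - α) with hM
  have hM0 : 0 < M := mul_pos (Real.rpow_pos_of_pos (by norm_num : (0:ℝ) < Real.sqrt 2) α)
    (Real.rpow_pos_of_pos (by norm_num) _)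
  set S : ℝ := ∑' m : Fin 3 → ℤ, jb m 0 ^ (-(σ - α)) with hSdef
  have hS0 : 0 ≤ S := tsum_nonneg fun m => Real.rpow_nonneg (jb_pos m 0).le _
  refine ⟨M * (2 * S) + 1, by positivity, ?_⟩
  intro z t hz ht k hk
  have hshift : Summable (fun ℓ : Fin 3 → ℤ => jb (k - ℓ) 0 ^ (-(σ - α))) := by
    have h := ((Equiv.subLeft k).summable_iff
      (f := fun m : Fin 3 → ℤ => jb m 0 ^ (-(σ - α)))).mpr hS
    exact h
  have hmaj : Summable (fun ℓ : Fin 3 → ℤ =>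
      M * (jb ℓ 0 ^ (-(σ - α)) + jb (k - ℓ) 0 ^ (-(σ - α)))) := (hS.add hshift).mul_left M
  have hbound : ∀ ℓ, kernelTerm γ σ α z t k ℓ ≤
      M * (jb ℓ 0 ^ (-(σ - α)) + jb (k - ℓ) 0 ^ (-(σ - α))) := by
    intro ℓ
    have h := kernelTerm_le hγ0 hγ1 hα0 hασ hz hk ℓ (σ := σ) (z := z) (t := t)
    simpa [hM, mul_assoc] using h
  have hnn : ∀ ℓ, 0 ≤ kernelTerm γ σ α z t k ℓ := fun ℓ => kernelTerm_nonneg γ σ α z t k ℓ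
  have hsum : Summable (fun ℓ : Fin 3 → ℤ => kernelTerm γ σ α z t k ℓ) :=
    Summable.of_nonneg_of_le hnn hbound hmaj
  refine ⟨hsum, ?_⟩
  have htsum : (∑' ℓ : Fin 3 → ℤ, kernelTerm γ σ α z t k ℓ) ≤
      ∑' ℓ : Fin 3 → ℤ, M * (jb ℓ 0 ^ (-(σ - α)) + jb (k - ℓ) 0 ^ (-(σ - α))) :=
    Summable.tsum_le_tsum hbound hsum hmaj
  have heq : (∑' ℓ : Fin 3 → ℤ, M * (jb ℓ 0 ^ (-(σ - α)) + jb (k - ℓ) 0 ^ (-(σ - α))))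
      = M * (S + S) := by
    rw [tsum_mul_left]
    congr 1
    rw [Summable.tsum_add hS hshift]
    congr 1
    exact (Equiv.subLeft k).tsum_eq (fun m : Fin 3 → ℤ => jb m 0 ^ (-(σ - α)))
  rw [heq] at htsum
  linarith
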